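/- Under the linear herding model with no misbehaving ratings, for the average scoring rule A(x) = ∑_{m=1}^M m·x_m the following holds: for any ε > 0 and δ ∈ (0,1), if the number of ratings i satisfies φ_i ≥ (M²(M+1)²/(4ε²))·ln(2M/δ), then |A(β_i) − A(α)| ≤ ε holds with probability at least 1 − δ. -/

import Mathlib

open MeasureTheory Filter

/-- Cumulative weight `∑_{j=1}^i w_j`. -/
noncomputable def Sw (w : ℕ → ℝ) (i : ℕ) : ℝ := ∑ j ∈ Finset.Icc 1 i, w j

/-- Normalized weight `w̃_i = w_i / ∑_{j=1}^i w_j`. -/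
noncomputable def wnorm (w : ℕ → ℝ) (i : ℕ) : ℝ := w i / Sw w i

/-- Historical collective opinion
`β_{i,m} = (∑_{j=1}^i w_j 1{R_j = m}) / (∑_{j=1}^i w_j)`. -/
noncomputable def betaH {Ω : Type*} (w : ℕ → ℝ) (R : ℕ → Ω → ℕ) (i m : ℕ) (ω : Ω) : ℝ :=
  (∑ j ∈ Finset.Icc 1 i, w j * (if R j ω = m then (1 : ℝ) else 0)) / Sw w i

/-- `𝓗_i`: the σ-algebra generated by `R_1, …, R_i` (trivial for `i = 0`). -/
def Hsig {Ω : Type*} (R : ℕ → Ω → ℕ) (i : ℕ) : MeasurableSpace Ω :=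
  ⨆ j ∈ Finset.Icc 1 i, MeasurableSpace.comap (R j) ⊤

/-- `ϕ_j = ∏_{ℓ=1}^j [1 − w̃_{ℓ+1} (1 − γ_ℓ + η_ℓ γ_ℓ)]` (with `ϕ_0 = 1`). -/
noncomputable def varphi (wt γ η : ℕ → ℝ) (j : ℕ) : ℝ :=
  ∏ ℓ ∈ Finset.Icc 1 j, (1 - wt (ℓ + 1) * (1 - γ ℓ + η ℓ * γ ℓ))

/-- Convergence-speed metric `φ_i = 1 / ((ϕ_{i−1}²/2) · ∑_{j=1}^i w̃_j²/ϕ_{j−1}²)`. -/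
noncomputable def phiSpeed (wt γ η : ℕ → ℝ) (i : ℕ) : ℝ :=
  1 / ((varphi wt γ η (i - 1)) ^ 2 / 2 *
    ∑ j ∈ Finset.Icc 1 i, (wt j) ^ 2 / (varphi wt γ η (j - 1)) ^ 2)


lemma Sw_pos {w : ℕ → ℝ} (hw : ∀ j, 0 ≤ w j) (hw1 : 0 < w 1) {j : ℕ} (hj : 1 ≤ j) :
    0 < Sw w j := by
  have h1 : w 1 ≤ Sw w j :=
    Finset.single_le_sum (fun l _ => hw l) (Finset.mem_Icc.mpr ⟨le_refl 1, hj⟩)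
  linarith

lemma wnorm_mem {w : ℕ → ℝ} (hw : ∀ j, 0 ≤ w j) (hw1 : 0 < w 1) {j : ℕ} (hj : 1 ≤ j) :
    wnorm w j ∈ Set.Icc (0:ℝ) 1 := by
  have hS := Sw_pos hw hw1 hj
  have hle : w j ≤ Sw w j :=
    Finset.single_le_sum (fun l _ => hw l) (Finset.mem_Icc.mpr ⟨hj, le_refl j⟩)
  exact ⟨div_nonneg (hw j) hS.le, (div_le_one hS).mpr hle⟩

lemma betaH_mem {Ω : Type*} {w : ℕ → ℝ} (hw : ∀ j, 0 ≤ w j) (hw1 : 0 < w 1)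
    (R : ℕ → Ω → ℕ) {j : ℕ} (hj : 1 ≤ j) (m : ℕ) (ω : Ω) :
    betaH w R j m ω ∈ Set.Icc (0:ℝ) 1 := by
  have hS := Sw_pos hw hw1 hj
  have hnum0 : 0 ≤ ∑ l ∈ Finset.Icc 1 j, w l * (if R l ω = m then (1:ℝ) else 0) := by
    refine Finset.sum_nonneg fun l _ => ?_
    split <;> simp [hw l]
  have hnum1 : (∑ l ∈ Finset.Icc 1 j, w l * (if R l ω = m then (1:ℝ) else 0)) ≤ Sw w j := by
    refine Finset.sum_le_sum fun l _ => ?_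
    split <;> simp [hw l]
  exact ⟨div_nonneg hnum0 hS.le, (div_le_one hS).mpr hnum1⟩

lemma Hsig_le_ambient {Ω : Type*} [m0 : MeasurableSpace Ω] {R : ℕ → Ω → ℕ}
    (hR : ∀ l, Measurable (R l)) (j : ℕ) : Hsig R j ≤ m0 :=
  iSup₂_le fun l _ => (hR l).comap_le

lemma betaH_sm {Ω : Type*} (w : ℕ → ℝ) (R : ℕ → Ω → ℕ) (j m : ℕ) :
    StronglyMeasurable[Hsig R j] (betaH w R j m) := by
  have hsum : Measurable[Hsig R j]
      (fun ω => ∑ l ∈ Finset.Icc 1 j, w l * (if R l ω = m then (1:ℝ) else 0)) := by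
    refine Finset.measurable_sum _ fun l hl => ?_
    have h1 : @Measurable Ω ℕ (MeasurableSpace.comap (R l) ⊤) ⊤ (R l) :=
      Measurable.of_comap_le le_rfl
    have h2 : @Measurable ℕ ℝ ⊤ _ (fun n => if n = m then (1:ℝ) else 0) := measurable_from_top
    have h3 := (h2.comp h1).const_mul (w l)
    exact h3.mono
      (le_iSup₂ (f := fun l (_ : l ∈ Finset.Icc 1 j) => MeasurableSpace.comap (R l) ⊤) l hl)
      le_rfl
  exact (hsum.div_const _).stronglyMeasurable

lemma sum_Icc_id_real (M : ℕ) : (∑ m ∈ Finset.Icc 1 M, (m:ℝ)) = M*(M+1)/2 := by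
  induction M with
  | zero => simp
  | succ n ih =>
      rw [Finset.sum_Icc_succ_top (by omega : 1 ≤ n + 1), ih]
      push_cast; ring

lemma varphi_succ (wt γ η : ℕ → ℝ) {j : ℕ} (hj : 1 ≤ j) :
    varphi wt γ η j = varphi wt γ η (j-1) * (1 - wt (j + 1) * (1 - γ j + η j * γ j)) := by
  obtain ⟨k, rfl⟩ : ∃ k, j = k + 1 := ⟨j - 1, by omega⟩
  simp only [Nat.add_sub_cancel]
  exact Finset.prod_Icc_succ_top (by omega) _

lemma varphi_mul (wt γ η : ℕ → ℝ) {a b : ℕ} (hab : a ≤ b) :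
    varphi wt γ η b = varphi wt γ η a *
      ∏ ℓ ∈ Finset.Ioc a b, (1 - wt (ℓ + 1) * (1 - γ ℓ + η ℓ * γ ℓ)) := by
  unfold varphi
  rw [show Finset.Icc 1 b = Finset.Ioc 0 b from by rw [← Finset.Icc_add_one_left_eq_Ioc, zero_add],
      show Finset.Icc 1 a = Finset.Ioc 0 a from by rw [← Finset.Icc_add_one_left_eq_Ioc, zero_add]]
  exact (Finset.prod_Ioc_consecutive _ (Nat.zero_le a) hab).symm

lemma rec_identity (t b I' a g e u W φ1 : ℝ) (hW : W ≠ 0) (hWu : W + u ≠ 0)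
    (hφ1 : φ1 ≠ 0) (hf : 1 - u/(W+u) * (1 - g + e*g) ≠ 0) :
    t * (((b*W + u*I')/(W+u) - a) / (φ1 * (1 - u/(W+u)*(1-g+e*g))))
    = t * ((b - a)/φ1) + (t * ((u/(W+u)) / (φ1 * (1 - u/(W+u)*(1-g+e*g))))) *
        (I' - (g*((1-e)*b + e*a) + (1-g)*a)) := by
  have hfe : 1 - u/(W+u) * (1 - g + e*g) = (W + u - u*(1-g+e*g))/(W+u) := by
    field_simp
  have hD : W + u - u*(1-g+e*g) ≠ 0 := by
    intro h0
    rw [hfe, h0, zero_div] at hf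
    exact hf rfl
  rw [hfe]
  generalize hDg : W + u - u*(1-g+e*g) = D at *
  field_simp
  rw [← hDg]
  ring


/-- Classical Hoeffding-lemma kernel inequality. -/
lemma hoeffding_kernel (p t : ℝ) (hp0 : 0 ≤ p) (hp1 : p ≤ 1) :
    (1 - p) * Real.exp (-(t * p)) + p * Real.exp (t * (1 - p)) ≤ Real.exp (t ^ 2 / 8) := by
  set d : ℝ → ℝ := fun s => 1 - p + p * Real.exp s with hd_def
  have hd : ∀ s, 0 < d s := by
    intro s
    rcases eq_or_lt_of_le hp1 with h | h
    · simp only [hd_def, ← h]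
      have := Real.exp_pos s; nlinarith
    · have : 0 ≤ p * Real.exp s := mul_nonneg hp0 (Real.exp_pos s).le
      simp only [hd_def]; nlinarith
  have hd' : ∀ s, HasDerivAt d (p * Real.exp s) s := by
    intro s
    exact ((Real.hasDerivAt_exp s).const_mul p).const_add (1 - p)
  set h : ℝ → ℝ := fun s => p * Real.exp s / d s - p - s / 4 with hh_def
  set g : ℝ → ℝ := fun s => Real.log (d s) - s * p - s ^ 2 / 8 with hg_def
  have hg' : ∀ s, HasDerivAt g (h s) s := by
    intro s
    have h1 : HasDerivAt (fun s => Real.log (d s)) (p * Real.exp s / d s) s :=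
      (hd' s).log (hd s).ne'
    have h2 : HasDerivAt (fun s : ℝ => s * p) p s := by
      simpa using (hasDerivAt_id s).mul_const p
    have h3 : HasDerivAt (fun s : ℝ => s ^ 2 / 8) (s / 4) s := by
      have := (hasDerivAt_pow 2 s).div_const 8
      exact this.congr_deriv (by norm_num; ring)
    exact (h1.sub h2).sub h3
  have hh' : ∀ s, HasDerivAt h (p * (1 - p) * Real.exp s / (d s) ^ 2 - 1 / 4) s := by
    intro s
    have h1 : HasDerivAt (fun s => p * Real.exp s / d s)
        ((p * Real.exp s * d s - p * Real.exp s * (p * Real.exp s)) / (d s) ^ 2) s :=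
      ((Real.hasDerivAt_exp s).const_mul p).div (hd' s) (hd s).ne'
    have h2 : HasDerivAt (fun s : ℝ => p + s / 4) (1 / 4) s := by
      simpa using ((hasDerivAt_id s).div_const 4).const_add p
    have := h1.sub h2
    have key : (p * Real.exp s * d s - p * Real.exp s * (p * Real.exp s)) / (d s) ^ 2
        = p * (1 - p) * Real.exp s / (d s) ^ 2 := by
      congr 1; simp only [hd_def]; ring
    rw [key] at this
    refine this.congr_of_eventuallyEq (Filter.Eventually.of_forall fun x => ?_)
    simp only [hh_def, Pi.sub_apply]; ring
  have hderiv_nonpos : ∀ s, p * (1 - p) * Real.exp s / (d s) ^ 2 - 1 / 4 ≤ 0 := by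
    intro s
    have hq : p * (1 - p) * Real.exp s / (d s) ^ 2 ≤ 1 / 4 := by
      rw [div_le_iff₀ (pow_pos (hd s) 2)]
      have hsq := sq_nonneg ((1 - p) - p * Real.exp s)
      simp only [hd_def]; nlinarith
    linarith
  have hanti : Antitone h := by
    have hdiff : Differentiable ℝ h := fun s => (hh' s).differentiableAt
    refine antitone_of_deriv_nonpos hdiff fun s => ?_
    rw [(hh' s).deriv]; exact hderiv_nonpos s
  have h0 : h 0 = 0 := by
    simp [hh_def, hd_def, Real.exp_zero]
  have g0 : g 0 = 0 := by
    simp [hg_def, hd_def, Real.exp_zero]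
  have hgle : ∀ s, g s ≤ 0 := by
    intro s
    rcases le_total 0 s with hs | hs
    · have : AntitoneOn g (Set.Ici 0) := by
        refine antitoneOn_of_deriv_nonpos (convex_Ici 0)
          (fun x _ => (hg' x).differentiableAt.continuousAt.continuousWithinAt)
          (fun x _ => (hg' x).differentiableAt.differentiableWithinAt)
          (fun x hx => ?_)
        rw [(hg' x).deriv]
        rw [interior_Ici] at hx
        calc h x ≤ h 0 := hanti (le_of_lt hx)
          _ = 0 := h0
      calc g s ≤ g 0 := this (Set.self_mem_Ici) hs hs
        _ = 0 := g0
    · have : MonotoneOn g (Set.Iic 0) := by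
        refine monotoneOn_of_deriv_nonneg (convex_Iic 0)
          (fun x _ => (hg' x).differentiableAt.continuousAt.continuousWithinAt)
          (fun x _ => (hg' x).differentiableAt.differentiableWithinAt)
          (fun x hx => ?_)
        rw [(hg' x).deriv]
        rw [interior_Iic] at hx
        have : h 0 ≤ h x := hanti (le_of_lt hx)
        rw [h0] at this; exact this
      calc g s ≤ g 0 := this hs Set.self_mem_Iic hs
        _ = 0 := g0
  have hlog : Real.log (d t) ≤ t * p + t ^ 2 / 8 := by
    have := hgle t; simp only [hg_def] at this; linarith
  have hdle : d t ≤ Real.exp (t * p + t ^ 2 / 8) :=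
    (Real.log_le_iff_le_exp (hd t)).mp hlog
  have e1 : Real.exp (t * (1 - p)) = Real.exp (-(t * p)) * Real.exp t := by
    rw [← Real.exp_add]; ring_nf
  have e2 : (1 - p) * Real.exp (-(t * p)) + p * Real.exp (t * (1 - p))
      = Real.exp (-(t * p)) * d t := by
    rw [e1]; simp only [hd_def]; ring
  rw [e2]
  calc Real.exp (-(t * p)) * d t ≤ Real.exp (-(t * p)) * Real.exp (t * p + t ^ 2 / 8) :=
        mul_le_mul_of_nonneg_left hdle (Real.exp_pos _).le
    _ = Real.exp (t ^ 2 / 8) := by rw [← Real.exp_add]; ring_nf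


/-- Bounded a.e.-strongly-measurable functions are integrable on finite measures. -/
lemma integrable_of_abs_le {Ω : Type*} [MeasurableSpace Ω] {μ : Measure Ω} [IsFiniteMeasure μ]
    {f : Ω → ℝ} (hf : AEStronglyMeasurable f μ) (C : ℝ) (h : ∀ ω, |f ω| ≤ C) :
    Integrable f μ := by
  refine Integrable.mono' (integrable_const C) hf (Filter.Eventually.of_forall fun ω => ?_)
  simpa [Real.norm_eq_abs] using h ω

/-- One-step MGF bound for a conditionally-centered bounded (Bernoulli-type) increment. -/
lemma mgf_one_step {Ω : Type*} {m' : MeasurableSpace Ω} [m0 : MeasurableSpace Ω]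
    (μ : Measure Ω) [IsProbabilityMeasure μ] (hm : m' ≤ m0)
    (Y p I : Ω → ℝ) (c : ℝ)
    (hYm : StronglyMeasurable[m'] Y) (C : ℝ) (hYb : ∀ ω, |Y ω| ≤ C)
    (hpm : StronglyMeasurable[m'] p) (hp0 : ∀ ω, 0 ≤ p ω) (hp1 : ∀ ω, p ω ≤ 1)
    (hIm : Measurable I) (hI01 : ∀ ω, I ω = 0 ∨ I ω = 1)
    (hcond : μ[I | m'] =ᵐ[μ] p) :
    ∫ ω, Real.exp (Y ω + c * (I ω - p ω)) ∂μ
      ≤ Real.exp (c ^ 2 / 8) * ∫ ω, Real.exp (Y ω) ∂μ := by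
  have hYm0 : StronglyMeasurable Y := hYm.mono hm
  have hpm0 : StronglyMeasurable p := hpm.mono hm
  set f2 : Ω → ℝ := fun ω => Real.exp (Y ω) * (Real.exp (c * (1 - p ω)) - Real.exp (-(c * p ω)))
    with hf2_def
  have hf2m' : StronglyMeasurable[m'] f2 := by
    refine ((Real.continuous_exp.comp_stronglyMeasurable hYm).mul ?_)
    exact (Real.continuous_exp.comp_stronglyMeasurable
        ((stronglyMeasurable_const.sub hpm).const_mul c)).sub
      (Real.continuous_exp.comp_stronglyMeasurable ((hpm.const_mul c).neg))
  have hf2m0 : StronglyMeasurable f2 := hf2m'.mono hm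
  -- bounds
  have hexpY : ∀ ω, Real.exp (Y ω) ≤ Real.exp C := fun ω =>
    Real.exp_le_exp.mpr ((abs_le.mp (hYb ω)).2)
  have habs1 : ∀ ω, Real.exp (c * (1 - p ω)) ≤ Real.exp |c| := by
    intro ω
    refine Real.exp_le_exp.mpr ?_
    calc c * (1 - p ω) ≤ |c * (1 - p ω)| := le_abs_self _
      _ = |c| * |1 - p ω| := abs_mul _ _
      _ ≤ |c| * 1 := by
          refine mul_le_mul_of_nonneg_left ?_ (abs_nonneg c)
          rw [abs_le]; constructor <;> [linarith [hp1 ω]; linarith [hp0 ω]]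
      _ = |c| := mul_one _
  have habs2 : ∀ ω, Real.exp (-(c * p ω)) ≤ Real.exp |c| := by
    intro ω
    refine Real.exp_le_exp.mpr ?_
    calc -(c * p ω) ≤ |c * p ω| := neg_le_abs _
      _ = |c| * |p ω| := abs_mul _ _
      _ ≤ |c| * 1 := by
          refine mul_le_mul_of_nonneg_left ?_ (abs_nonneg c)
          rw [abs_le]; constructor <;> [linarith [hp0 ω]; linarith [hp1 ω]]
      _ = |c| := mul_one _
  have hf2b : ∀ ω, |f2 ω| ≤ Real.exp C * (2 * Real.exp |c|) := by
    intro ω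
    rw [hf2_def, abs_mul, Real.abs_exp]
    refine mul_le_mul (hexpY ω) ?_ (abs_nonneg _) (Real.exp_pos C).le
    calc |Real.exp (c * (1 - p ω)) - Real.exp (-(c * p ω))|
        ≤ |Real.exp (c * (1 - p ω))| + |Real.exp (-(c * p ω))| := abs_sub _ _
      _ = Real.exp (c * (1 - p ω)) + Real.exp (-(c * p ω)) := by rw [Real.abs_exp, Real.abs_exp]
      _ ≤ Real.exp |c| + Real.exp |c| := add_le_add (habs1 ω) (habs2 ω)
      _ = 2 * Real.exp |c| := by ring
  have hIb : ∀ ω, |I ω| ≤ 1 := by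
    intro ω; rcases hI01 ω with h | h <;> simp [h]
  -- integrability
  have hintI : Integrable I μ := integrable_of_abs_le hIm.aestronglyMeasurable 1 hIb
  have hintf2I : Integrable (f2 * I) μ := by
    refine integrable_of_abs_le ((hf2m0.mul (hIm.stronglyMeasurable)).aestronglyMeasurable)
      (Real.exp C * (2 * Real.exp |c|)) fun ω => ?_
    calc |f2 ω * I ω| = |f2 ω| * |I ω| := abs_mul _ _
      _ ≤ (Real.exp C * (2 * Real.exp |c|)) * 1 :=
          mul_le_mul (hf2b ω) (hIb ω) (abs_nonneg _) (by positivity)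
      _ = _ := mul_one _
  have hintf1 : Integrable (fun ω => Real.exp (Y ω) * Real.exp (-(c * p ω))) μ := by
    refine integrable_of_abs_le
      ((Real.continuous_exp.comp_stronglyMeasurable hYm0).mul
        (Real.continuous_exp.comp_stronglyMeasurable ((hpm0.const_mul c).neg))).aestronglyMeasurable
      (Real.exp C * Real.exp |c|) fun ω => ?_
    rw [abs_mul, Real.abs_exp, Real.abs_exp]
    exact mul_le_mul (hexpY ω) (habs2 ω) (Real.exp_pos _).le (Real.exp_pos _).le
  have hintf2p : Integrable (fun ω => f2 ω * p ω) μ := by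
    refine integrable_of_abs_le (hf2m0.mul hpm0).aestronglyMeasurable
      (Real.exp C * (2 * Real.exp |c|)) fun ω => ?_
    calc |f2 ω * p ω| = |f2 ω| * |p ω| := abs_mul _ _
      _ ≤ (Real.exp C * (2 * Real.exp |c|)) * 1 := by
          refine mul_le_mul (hf2b ω) ?_ (abs_nonneg _) (by positivity)
          rw [abs_le]; constructor <;> [linarith [hp0 ω]; linarith [hp1 ω]]
      _ = _ := mul_one _
  -- pointwise identity
  have hpt : ∀ ω, Real.exp (Y ω + c * (I ω - p ω))
      = Real.exp (Y ω) * Real.exp (-(c * p ω)) + f2 ω * I ω := by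
    intro ω
    rcases hI01 ω with h | h
    · rw [hf2_def]; simp only [h, mul_zero, add_zero]
      rw [← Real.exp_add]; ring_nf
    · rw [hf2_def]; simp only [h, mul_one, mul_sub, ← Real.exp_add]; ring
  -- the conditional-expectation pull-out
  have hpull : ∫ ω, f2 ω * I ω ∂μ = ∫ ω, f2 ω * p ω ∂μ := by
    have h1 : μ[f2 * I | m'] =ᵐ[μ] f2 * μ[I | m'] :=
      condExp_mul_of_stronglyMeasurable_left hf2m' hintf2I hintI
    have h2 : f2 * μ[I | m'] =ᵐ[μ] f2 * p := by
      filter_upwards [hcond] with ω hω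
      simp only [Pi.mul_apply, hω]
    calc ∫ ω, f2 ω * I ω ∂μ = ∫ ω, (f2 * I) ω ∂μ := rfl
      _ = ∫ ω, (μ[f2 * I | m']) ω ∂μ := (integral_condExp hm).symm
      _ = ∫ ω, (f2 * p) ω ∂μ := integral_congr_ae (h1.trans h2)
      _ = ∫ ω, f2 ω * p ω ∂μ := rfl
  calc ∫ ω, Real.exp (Y ω + c * (I ω - p ω)) ∂μ
      = ∫ ω, (Real.exp (Y ω) * Real.exp (-(c * p ω)) + f2 ω * I ω) ∂μ := by
        exact integral_congr_ae (Filter.Eventually.of_forall hpt)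
    _ = (∫ ω, Real.exp (Y ω) * Real.exp (-(c * p ω)) ∂μ) + ∫ ω, f2 ω * I ω ∂μ :=
        integral_add hintf1 hintf2I
    _ = (∫ ω, Real.exp (Y ω) * Real.exp (-(c * p ω)) ∂μ) + ∫ ω, f2 ω * p ω ∂μ := by rw [hpull]
    _ = ∫ ω, (Real.exp (Y ω) * Real.exp (-(c * p ω)) + f2 ω * p ω) ∂μ :=
        (integral_add hintf1 hintf2p).symm
    _ ≤ ∫ ω, Real.exp (Y ω) * Real.exp (c ^ 2 / 8) ∂μ := by
        refine integral_mono (hintf1.add hintf2p) ?_ fun ω => ?_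
        · exact integrable_of_abs_le
            ((Real.continuous_exp.comp_stronglyMeasurable hYm0).mul_const _).aestronglyMeasurable
            (Real.exp C * Real.exp (c ^ 2 / 8)) fun ω => by
              rw [abs_mul, Real.abs_exp, Real.abs_exp]
              exact mul_le_mul_of_nonneg_right (hexpY ω) (Real.exp_pos _).le
        · have key : (1 - p ω) * Real.exp (-(c * p ω)) + p ω * Real.exp (c * (1 - p ω))
              ≤ Real.exp (c ^ 2 / 8) := hoeffding_kernel (p ω) c (hp0 ω) (hp1 ω)
          have expand : Real.exp (Y ω) * Real.exp (-(c * p ω)) + f2 ω * p ω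
              = Real.exp (Y ω) * ((1 - p ω) * Real.exp (-(c * p ω))
                + p ω * Real.exp (c * (1 - p ω))) := by
            rw [hf2_def]; ring
          rw [expand]
          exact mul_le_mul_of_nonneg_left key (Real.exp_pos _).le
    _ = Real.exp (c ^ 2 / 8) * ∫ ω, Real.exp (Y ω) ∂μ := by
        rw [integral_mul_const, mul_comm]


lemma chernoff_two_sided {Ω : Type*} [MeasurableSpace Ω] (μ : Measure Ω) [IsProbabilityMeasure μ]
    (Z : Ω → ℝ) (hZm : Measurable Z) (C : ℝ) (hZb : ∀ ω, |Z ω| ≤ C)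
    (SI s' : ℝ) (hSI : 0 < SI) (hs' : 0 ≤ s')
    (hmgf : ∀ u : ℝ, ∫ ω, Real.exp (u * Z ω) ∂μ ≤ Real.exp (u ^ 2 * SI / 8)) :
    μ {ω | s' ≤ |Z ω|} ≤ ENNReal.ofReal (2 * Real.exp (-(2 * s' ^ 2 / SI))) := by
  have hint : ∀ u : ℝ, Integrable (fun ω => Real.exp (u * Z ω)) μ := by
    intro u
    refine integrable_of_abs_le ((Real.continuous_exp.comp_stronglyMeasurable
      (hZm.stronglyMeasurable.const_mul u)).aestronglyMeasurable) (Real.exp (|u| * C)) fun ω => ?_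
    rw [Real.abs_exp]
    refine Real.exp_le_exp.mpr ?_
    calc u * Z ω ≤ |u * Z ω| := le_abs_self _
      _ = |u| * |Z ω| := abs_mul _ _
      _ ≤ |u| * C := mul_le_mul_of_nonneg_left (hZb ω) (abs_nonneg u)
  set u0 : ℝ := 4 * s' / SI with hu0
  have hu0nn : 0 ≤ u0 := by positivity
  have harith : -u0 * s' + u0 ^ 2 * SI / 8 = -(2 * s' ^ 2 / SI) := by
    rw [hu0]; field_simp; ring
  have h1 : (μ {ω | s' ≤ Z ω}).toReal ≤ Real.exp (-(2 * s' ^ 2 / SI)) := by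
    calc (μ {ω | s' ≤ Z ω}).toReal
        ≤ Real.exp (-u0 * s') * ProbabilityTheory.mgf Z μ u0 :=
          ProbabilityTheory.measure_ge_le_exp_mul_mgf s' hu0nn (hint u0)
      _ ≤ Real.exp (-u0 * s') * Real.exp (u0 ^ 2 * SI / 8) :=
          mul_le_mul_of_nonneg_left (hmgf u0) (Real.exp_pos _).le
      _ = Real.exp (-u0 * s' + u0 ^ 2 * SI / 8) := (Real.exp_add _ _).symm
      _ = Real.exp (-(2 * s' ^ 2 / SI)) := by rw [harith]
  have h2 : (μ {ω | Z ω ≤ -s'}).toReal ≤ Real.exp (-(2 * s' ^ 2 / SI)) := by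
    calc (μ {ω | Z ω ≤ -s'}).toReal
        ≤ Real.exp (-(-u0) * (-s')) * ProbabilityTheory.mgf Z μ (-u0) :=
          ProbabilityTheory.measure_le_le_exp_mul_mgf (-s') (neg_nonpos.mpr hu0nn) (hint (-u0))
      _ ≤ Real.exp (-(-u0) * (-s')) * Real.exp ((-u0) ^ 2 * SI / 8) :=
          mul_le_mul_of_nonneg_left (hmgf (-u0)) (Real.exp_pos _).le
      _ = Real.exp (-(-u0) * (-s') + (-u0) ^ 2 * SI / 8) := (Real.exp_add _ _).symm
      _ = Real.exp (-(2 * s' ^ 2 / SI)) := by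
          rw [show -(-u0) * (-s') + (-u0) ^ 2 * SI / 8 = -u0 * s' + u0 ^ 2 * SI / 8 from by ring,
            harith]
  have hsub : {ω | s' ≤ |Z ω|} ⊆ {ω | s' ≤ Z ω} ∪ {ω | Z ω ≤ -s'} := by
    intro ω hω
    rw [Set.mem_setOf_eq] at hω
    rcases le_or_gt 0 (Z ω) with h | h
    · left; rwa [Set.mem_setOf_eq, ← abs_of_nonneg h]
    · right
      rw [abs_of_neg h] at hω
      rw [Set.mem_setOf_eq]; linarith
  calc μ {ω | s' ≤ |Z ω|} ≤ μ ({ω | s' ≤ Z ω} ∪ {ω | Z ω ≤ -s'}) := measure_mono hsub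
    _ ≤ μ {ω | s' ≤ Z ω} + μ {ω | Z ω ≤ -s'} := measure_union_le _ _
    _ ≤ ENNReal.ofReal (Real.exp (-(2 * s' ^ 2 / SI)))
        + ENNReal.ofReal (Real.exp (-(2 * s' ^ 2 / SI))) := by
        refine add_le_add ?_ ?_
        · rw [← ENNReal.ofReal_toReal (measure_ne_top μ _)]
          exact ENNReal.ofReal_le_ofReal h1
        · rw [← ENNReal.ofReal_toReal (measure_ne_top μ _)]
          exact ENNReal.ofReal_le_ofReal h2
    _ = ENNReal.ofReal (2 * Real.exp (-(2 * s' ^ 2 / SI))) := by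
        rw [← ENNReal.ofReal_add (Real.exp_pos _).le (Real.exp_pos _).le]
        congr 1; ring

set_option maxHeartbeats 1000000

/-- Under the linear herding model with no misbehaving ratings, for the
average scoring rule `A(x) = ∑ m·x_m`: if `φ_i ≥ (M²(M+1)²/(4ε²)) ln(2M/δ)`, then
`|A(β_i) − A(α)| ≤ ε` with probability at least `1 − δ`. -/
theorem stmt_8
    {Ω : Type*} [MeasurableSpace Ω] (μ : Measure Ω) [IsProbabilityMeasure μ]
    (M : ℕ) (hM : 1 ≤ M)
    (α : ℕ → ℝ) (hα : ∀ m ∈ Finset.Icc 1 M, α m ∈ Set.Icc (0 : ℝ) 1)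
    (hα1 : ∑ m ∈ Finset.Icc 1 M, α m = 1)
    (R : ℕ → Ω → ℕ) (hRrange : ∀ i, 1 ≤ i → ∀ ω, R i ω ∈ Finset.Icc 1 M)
    (hRmeas : ∀ i, Measurable (R i))
    (w : ℕ → ℝ) (hw : ∀ j, 0 ≤ w j) (hw1 : 0 < w 1)
    (γ : ℕ → ℝ) (hγ : ∀ i, γ i ∈ Set.Icc (0 : ℝ) 1)
    (hγsup : ∃ g, g < 1 ∧ ∀ i, γ i ≤ g)
    (η : ℕ → ℝ) (hη : ∀ i, η i ∈ Set.Icc (0 : ℝ) 1)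
    -- `P[R_1 = m] = α_m`
    (hR1 : ∀ m ∈ Finset.Icc 1 M, μ {ω | R 1 ω = m} = ENNReal.ofReal (α m))
    -- linear herding model
    (hmodel : ∀ i : ℕ, 1 ≤ i → ∀ m ∈ Finset.Icc 1 M,
      μ[(fun ω => if R (i + 1) ω = m then (1 : ℝ) else 0) | Hsig R i]
        =ᵐ[μ] fun ω =>
          γ i * ((1 - η i) * betaH w R i m ω + η i * α m) + (1 - γ i) * α m)
    -- Condition (2): `∑ w̃_i = ∞` and `∑ w̃_i² < ∞`
    (hdiv : Tendsto (fun n => ∑ i ∈ Finset.Icc 1 n, wnorm w i) atTop atTop)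
    (hsq : Summable fun i : ℕ => (wnorm w (i + 1)) ^ 2)
    (ε δ : ℝ) (hε : 0 < ε) (hδ0 : 0 < δ) (hδ1 : δ < 1)
    (i : ℕ) (hi : 1 ≤ i)
    (hphi : ((M : ℝ) ^ 2 * ((M : ℝ) + 1) ^ 2 / (4 * ε ^ 2)) * Real.log (2 * M / δ)
      ≤ phiSpeed (wnorm w) γ η i) :
    ENNReal.ofReal (1 - δ) ≤
      μ {ω | |(∑ m ∈ Finset.Icc 1 M, (m : ℝ) * betaH w R i m ω)
              - ∑ m ∈ Finset.Icc 1 M, (m : ℝ) * α m| ≤ ε} := by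
  -- basic numeric facts
  have hM1 : (1:ℝ) ≤ (M:ℝ) := by exact_mod_cast hM
  have hMpos : (0:ℝ) < (M:ℝ) := by linarith
  have h2M : (0:ℝ) < 2 * M / δ := by positivity
  have hL : 0 < Real.log (2 * M / δ) := by
    apply Real.log_pos
    rw [lt_div_iff₀ hδ0]; nlinarith
  have hKpos : 0 < (M : ℝ) ^ 2 * ((M : ℝ) + 1) ^ 2 / (4 * ε ^ 2) := by positivity
  unfold phiSpeed at hphi
  -- positivity of the normalizing product and the variance sum
  have hfac : ∀ ℓ : ℕ, (1 - wnorm w (ℓ + 1) * (1 - γ ℓ + η ℓ * γ ℓ)) ∈ Set.Icc (0:ℝ) 1 := by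
    intro ℓ
    have h1 := wnorm_mem hw hw1 (Nat.le_add_left 1 ℓ)
    have h2 := hγ ℓ; have h3 := hη ℓ
    have hc0 : 0 ≤ 1 - γ ℓ + η ℓ * γ ℓ := by nlinarith [h2.1, h2.2, h3.1, h3.2]
    have hc1 : 1 - γ ℓ + η ℓ * γ ℓ ≤ 1 := by nlinarith [h2.1, h2.2, h3.1, h3.2]
    constructor
    · nlinarith [h1.1, h1.2]
    · nlinarith [h1.1, h1.2]
  have hvarphi_nonneg : ∀ j, 0 ≤ varphi (wnorm w) γ η j := fun j =>
    Finset.prod_nonneg fun ℓ _ => (hfac ℓ).1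
  have hPne : varphi (wnorm w) γ η (i - 1) ≠ 0 := by
    intro h0
    rw [h0] at hphi
    simp only [ne_eq, OfNat.ofNat_ne_zero, not_false_eq_true, zero_pow, zero_div, zero_mul,
      div_zero] at hphi
    nlinarith [mul_pos hKpos hL]
  have hϕIpos : 0 < varphi (wnorm w) γ η (i - 1) :=
    lt_of_le_of_ne (hvarphi_nonneg _) (Ne.symm hPne)
  have hSnonneg : 0 ≤ ∑ j ∈ Finset.Icc 1 i, (wnorm w j) ^ 2 / (varphi (wnorm w) γ η (j - 1)) ^ 2 :=
    Finset.sum_nonneg fun l _ => by positivity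
  have hPpos : 0 < (varphi (wnorm w) γ η (i - 1)) ^ 2 / 2 *
      ∑ j ∈ Finset.Icc 1 i, (wnorm w j) ^ 2 / (varphi (wnorm w) γ η (j - 1)) ^ 2 := by
    by_contra hcon
    push_neg at hcon
    have h0 : (1:ℝ) / ((varphi (wnorm w) γ η (i - 1)) ^ 2 / 2 *
        ∑ j ∈ Finset.Icc 1 i, (wnorm w j) ^ 2 / (varphi (wnorm w) γ η (j - 1)) ^ 2) ≤ 0 :=
      div_nonpos_of_nonneg_of_nonpos zero_le_one hcon
    nlinarith [mul_pos hKpos hL]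
  have hSpos : 0 < ∑ j ∈ Finset.Icc 1 i, (wnorm w j) ^ 2 / (varphi (wnorm w) γ η (j - 1)) ^ 2 := by
    rcases lt_or_eq_of_le hSnonneg with h | h
    · exact h
    · exfalso; rw [← h, mul_zero] at hPpos; exact lt_irrefl 0 hPpos
  have hϕpos_all : ∀ j, 1 ≤ j → j ≤ i → 0 < varphi (wnorm w) γ η (j - 1) := by
    intro j hj hji
    have hmul := varphi_mul (wnorm w) γ η (show j - 1 ≤ i - 1 by omega)
    have hne2 : varphi (wnorm w) γ η (j - 1) ≠ 0 := by
      intro h0; rw [h0, zero_mul] at hmul; exact hPne hmul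
    exact lt_of_le_of_ne (hvarphi_nonneg _) (Ne.symm hne2)
  -- abbreviation facts
  have hMM : (0:ℝ) < (M:ℝ) * ((M:ℝ) + 1) := by positivity
  have hspos : 0 < 2 * ε / ((M:ℝ) * ((M:ℝ) + 1)) := by positivity
  -- The key MGF bound (proved for each rating value m)
  have key : ∀ m ∈ Finset.Icc 1 M, ∀ t : ℝ, ∀ j : ℕ, 1 ≤ j → j ≤ i →
      ∫ ω, Real.exp (t * ((betaH w R j m ω - α m) / varphi (wnorm w) γ η (j - 1))) ∂μ
        ≤ Real.exp (t ^ 2 *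
            (∑ l ∈ Finset.Icc 1 j, (wnorm w l) ^ 2 / (varphi (wnorm w) γ η (l - 1)) ^ 2) / 8) := by
    intro m hm t j hj
    induction j, hj using Nat.le_induction with
    | base =>
      intro _
      -- j = 1
      have hSw1 : Sw w 1 = w 1 := by rw [Sw, Finset.Icc_self, Finset.sum_singleton]
      have hwn1 : wnorm w 1 = 1 := by rw [wnorm, hSw1]; exact div_self hw1.ne'
      have hϕ0 : varphi (wnorm w) γ η 0 = 1 := by
        rw [varphi]; simp
      have hbeta1 : ∀ ω, betaH w R 1 m ω = if R 1 ω = m then (1:ℝ) else 0 := by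
        intro ω
        rw [betaH, hSw1, Finset.Icc_self, Finset.sum_singleton, mul_comm, mul_div_assoc,
          div_self hw1.ne', mul_one]
      have hαm := hα m hm
      have hI01 : ∀ ω, (if R 1 ω = m then (1:ℝ) else 0) = 0 ∨
          (if R 1 ω = m then (1:ℝ) else 0) = 1 := by
        intro ω; by_cases h : R 1 ω = m
        · right; simp [h]
        · left; simp [h]
      have hIm : Measurable (fun ω => if R 1 ω = m then (1:ℝ) else 0) :=
        (measurable_from_top (f := fun n : ℕ => if n = m then (1:ℝ) else 0)).comp (hRmeas 1)
      have hcond1 : μ[(fun ω => if R 1 ω = m then (1:ℝ) else 0) | (⊥ : MeasurableSpace Ω)]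
          =ᵐ[μ] fun _ => α m := by
        rw [condExp_bot]
        have hint : ∫ ω, (if R 1 ω = m then (1:ℝ) else 0) ∂μ = α m := by
          have hset : MeasurableSet {ω : Ω | R 1 ω = m} := hRmeas 1 (measurableSet_singleton m)
          have heq : (fun ω => if R 1 ω = m then (1:ℝ) else 0)
              = Set.indicator {ω : Ω | R 1 ω = m} (fun _ => (1:ℝ)) := by
            funext ω; simp [Set.indicator_apply, Set.mem_setOf_eq]
          rw [heq, integral_indicator_const (1:ℝ) hset,
            measureReal_def, hR1 m hm, smul_eq_mul, mul_one, ENNReal.toReal_ofReal hαm.1]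
        rw [hint]
      have happ := mgf_one_step μ (bot_le : (⊥ : MeasurableSpace Ω) ≤ _)
        (fun _ => (0:ℝ)) (fun _ => α m) (fun ω => if R 1 ω = m then (1:ℝ) else 0) t
        stronglyMeasurable_const 0 (by simp)
        stronglyMeasurable_const (fun _ => hαm.1) (fun _ => hαm.2) hIm hI01 hcond1
      simp only [Real.exp_zero, integral_const, measure_univ, ENNReal.toReal_one, probReal_univ,
        smul_eq_mul, mul_one, zero_add] at happ
      calc ∫ ω, Real.exp (t * ((betaH w R 1 m ω - α m) / varphi (wnorm w) γ η (1 - 1))) ∂μ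
          = ∫ ω, Real.exp (t * ((if R 1 ω = m then (1:ℝ) else 0) - α m)) ∂μ := by
            refine integral_congr_ae (Filter.Eventually.of_forall fun ω => ?_)
            simp only [show (1:ℕ) - 1 = 0 from rfl, hϕ0, div_one, hbeta1]
        _ ≤ Real.exp (t ^ 2 / 8) := happ
        _ = Real.exp (t ^ 2 *
            (∑ l ∈ Finset.Icc 1 1, (wnorm w l) ^ 2 / (varphi (wnorm w) γ η (l - 1)) ^ 2) / 8) := by
            congr 1
            rw [Finset.Icc_self, Finset.sum_singleton, hwn1,
              show (1:ℕ) - 1 = 0 from rfl, hϕ0]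
            norm_num
    | succ j hj ih =>
      intro hji1
      have hji : j ≤ i := by omega
      have hIH := ih hji
      have hSwj : 0 < Sw w j := Sw_pos hw hw1 hj
      have hϕj1pos : 0 < varphi (wnorm w) γ η (j - 1) := hϕpos_all j hj hji
      have hϕjpos : 0 < varphi (wnorm w) γ η j := by
        have := hϕpos_all (j + 1) (by omega) hji1
        simpa using this
      have hSwsucc : Sw w (j + 1) = Sw w j + w (j + 1) :=
        Finset.sum_Icc_succ_top (by omega) _
      have hSwsum : 0 < Sw w j + w (j + 1) := by have := hw (j + 1); linarith
      have hϕsucc := varphi_succ (wnorm w) γ η hj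
      have hwn : wnorm w (j + 1) = w (j + 1) / (Sw w j + w (j + 1)) := by
        rw [wnorm, hSwsucc]
      have hfne : (1 - w (j + 1) / (Sw w j + w (j + 1)) * (1 - γ j + η j * γ j)) ≠ 0 := by
        intro h0
        rw [hwn, h0, mul_zero] at hϕsucc
        exact hϕjpos.ne' hϕsucc
      have hαm := hα m hm
      have hγj := hγ j; have hηj := hη j
      -- measurability and bounds for the application of mgf_one_step
      have hYm : StronglyMeasurable[Hsig R j]
          (fun ω => t * ((betaH w R j m ω - α m) / varphi (wnorm w) γ η (j - 1))) :=
        ((((betaH_sm w R j m).measurable.sub measurable_const).div_const _).const_mul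
          t).stronglyMeasurable
      have hYb : ∀ ω, |t * ((betaH w R j m ω - α m) / varphi (wnorm w) γ η (j - 1))|
          ≤ |t| / varphi (wnorm w) γ η (j - 1) := by
        intro ω
        have hβ := betaH_mem hw hw1 R hj m ω
        have h1 : |betaH w R j m ω - α m| ≤ 1 := by
          rw [abs_le]; constructor
          · linarith [hβ.1, hαm.2]
          · linarith [hβ.2, hαm.1]
        calc |t * ((betaH w R j m ω - α m) / varphi (wnorm w) γ η (j - 1))|
            = |t| * (|betaH w R j m ω - α m| / varphi (wnorm w) γ η (j - 1)) := by
              rw [abs_mul, abs_div, abs_of_pos hϕj1pos]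
          _ ≤ |t| * (1 / varphi (wnorm w) γ η (j - 1)) := by gcongr
          _ = |t| / varphi (wnorm w) γ η (j - 1) := by rw [mul_one_div]
      have hpm : StronglyMeasurable[Hsig R j]
          (fun ω => γ j * ((1 - η j) * betaH w R j m ω + η j * α m) + (1 - γ j) * α m) :=
        (((((betaH_sm w R j m).measurable.const_mul (1 - η j)).add_const
          (η j * α m)).const_mul (γ j)).add_const ((1 - γ j) * α m)).stronglyMeasurable
      have hp0 : ∀ ω, 0 ≤ γ j * ((1 - η j) * betaH w R j m ω + η j * α m) + (1 - γ j) * α m := by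
        intro ω
        have hβ := betaH_mem hw hw1 R hj m ω
        have h1 : 0 ≤ (1 - η j) * betaH w R j m ω :=
          mul_nonneg (by linarith [hηj.2]) hβ.1
        have h2 : 0 ≤ η j * α m := mul_nonneg hηj.1 hαm.1
        have h3 : 0 ≤ γ j * ((1 - η j) * betaH w R j m ω + η j * α m) :=
          mul_nonneg hγj.1 (by linarith)
        have h4 : 0 ≤ (1 - γ j) * α m := mul_nonneg (by linarith [hγj.2]) hαm.1
        linarith
      have hp1 : ∀ ω, γ j * ((1 - η j) * betaH w R j m ω + η j * α m) + (1 - γ j) * α m ≤ 1 := by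
        intro ω
        have hβ := betaH_mem hw hw1 R hj m ω
        have h1 : (1 - η j) * betaH w R j m ω ≤ (1 - η j) * 1 :=
          mul_le_mul_of_nonneg_left hβ.2 (by linarith [hηj.2])
        have h2 : η j * α m ≤ η j * 1 := mul_le_mul_of_nonneg_left hαm.2 hηj.1
        have h3 : γ j * ((1 - η j) * betaH w R j m ω + η j * α m) ≤ γ j * 1 :=
          mul_le_mul_of_nonneg_left (by linarith) hγj.1
        have h4 : (1 - γ j) * α m ≤ (1 - γ j) * 1 :=
          mul_le_mul_of_nonneg_left hαm.2 (by linarith [hγj.2])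
        linarith
      have hIm : Measurable (fun ω => if R (j + 1) ω = m then (1:ℝ) else 0) :=
        (measurable_from_top (f := fun n : ℕ => if n = m then (1:ℝ) else 0)).comp (hRmeas (j + 1))
      have hI01 : ∀ ω, (if R (j + 1) ω = m then (1:ℝ) else 0) = 0 ∨
          (if R (j + 1) ω = m then (1:ℝ) else 0) = 1 := by
        intro ω; by_cases h : R (j + 1) ω = m
        · right; simp [h]
        · left; simp [h]
      have happ := mgf_one_step μ (Hsig_le_ambient hRmeas j)
        (fun ω => t * ((betaH w R j m ω - α m) / varphi (wnorm w) γ η (j - 1)))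
        (fun ω => γ j * ((1 - η j) * betaH w R j m ω + η j * α m) + (1 - γ j) * α m)
        (fun ω => if R (j + 1) ω = m then (1:ℝ) else 0)
        (t * (wnorm w (j + 1) / varphi (wnorm w) γ η j))
        hYm (|t| / varphi (wnorm w) γ η (j - 1)) hYb hpm hp0 hp1 hIm hI01
        (hmodel j hj m hm)
      -- the pathwise recursion identity
      have hrec : ∀ ω, t * ((betaH w R (j + 1) m ω - α m) / varphi (wnorm w) γ η (j + 1 - 1))
          = t * ((betaH w R j m ω - α m) / varphi (wnorm w) γ η (j - 1))
            + (t * (wnorm w (j + 1) / varphi (wnorm w) γ η j)) *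
              ((if R (j + 1) ω = m then (1:ℝ) else 0)
                - (γ j * ((1 - η j) * betaH w R j m ω + η j * α m) + (1 - γ j) * α m)) := by
        intro ω
        rw [show j + 1 - 1 = j from rfl]
        have hb' : betaH w R (j + 1) m ω = (betaH w R j m ω * Sw w j
            + w (j + 1) * (if R (j + 1) ω = m then (1:ℝ) else 0)) / (Sw w j + w (j + 1)) := by
          rw [betaH, Finset.sum_Icc_succ_top (by omega : 1 ≤ j + 1), hSwsucc]
          congr 2
          rw [betaH, div_mul_cancel₀ _ hSwj.ne']
        have hϕsucc' : varphi (wnorm w) γ η j = varphi (wnorm w) γ η (j - 1) *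
            (1 - w (j + 1) / (Sw w j + w (j + 1)) * (1 - γ j + η j * γ j)) := by
          rw [hϕsucc, hwn]
        rw [hb', hwn, hϕsucc']
        exact rec_identity t (betaH w R j m ω) _ (α m) (γ j) (η j) (w (j + 1)) (Sw w j) _
          hSwj.ne' hSwsum.ne' hϕj1pos.ne' hfne
      -- partial-sum recursion
      have hSsucc : (∑ l ∈ Finset.Icc 1 (j + 1),
            (wnorm w l) ^ 2 / (varphi (wnorm w) γ η (l - 1)) ^ 2)
          = (∑ l ∈ Finset.Icc 1 j, (wnorm w l) ^ 2 / (varphi (wnorm w) γ η (l - 1)) ^ 2)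
            + (wnorm w (j + 1)) ^ 2 / (varphi (wnorm w) γ η j) ^ 2 := by
        rw [Finset.sum_Icc_succ_top (by omega : 1 ≤ j + 1)]
        rfl
      calc ∫ ω, Real.exp (t * ((betaH w R (j + 1) m ω - α m)
              / varphi (wnorm w) γ η (j + 1 - 1))) ∂μ
          = ∫ ω, Real.exp ((t * ((betaH w R j m ω - α m) / varphi (wnorm w) γ η (j - 1)))
              + (t * (wnorm w (j + 1) / varphi (wnorm w) γ η j)) *
                ((if R (j + 1) ω = m then (1:ℝ) else 0)
                  - (γ j * ((1 - η j) * betaH w R j m ω + η j * α m) + (1 - γ j) * α m))) ∂μ := by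
            refine integral_congr_ae (Filter.Eventually.of_forall fun ω => ?_)
            exact congrArg Real.exp (hrec ω)
        _ ≤ Real.exp ((t * (wnorm w (j + 1) / varphi (wnorm w) γ η j)) ^ 2 / 8) *
              ∫ ω, Real.exp (t * ((betaH w R j m ω - α m)
                / varphi (wnorm w) γ η (j - 1))) ∂μ := happ
        _ ≤ Real.exp ((t * (wnorm w (j + 1) / varphi (wnorm w) γ η j)) ^ 2 / 8) *
              Real.exp (t ^ 2 * (∑ l ∈ Finset.Icc 1 j,
                (wnorm w l) ^ 2 / (varphi (wnorm w) γ η (l - 1)) ^ 2) / 8) := by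
            exact mul_le_mul_of_nonneg_left hIH (Real.exp_pos _).le
        _ = Real.exp (t ^ 2 * (∑ l ∈ Finset.Icc 1 (j + 1),
              (wnorm w l) ^ 2 / (varphi (wnorm w) γ η (l - 1)) ^ 2) / 8) := by
            rw [← Real.exp_add]
            congr 1
            rw [hSsucc, mul_pow, div_pow]
            ring
  -- Chernoff tail bound for each rating value m
  have chern : ∀ m ∈ Finset.Icc 1 M,
      μ {ω | 2 * ε / ((M:ℝ) * ((M:ℝ) + 1)) < |betaH w R i m ω - α m|}
        ≤ ENNReal.ofReal (2 * Real.exp (-(2 * (2 * ε / ((M:ℝ) * ((M:ℝ) + 1))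
              / varphi (wnorm w) γ η (i - 1)) ^ 2
            / ∑ l ∈ Finset.Icc 1 i, (wnorm w l) ^ 2 / (varphi (wnorm w) γ η (l - 1)) ^ 2))) := by
    intro m hm
    have hαm := hα m hm
    have hZm : Measurable (fun ω => (betaH w R i m ω - α m) / varphi (wnorm w) γ η (i - 1)) :=
      (((betaH_sm w R i m).measurable.mono (Hsig_le_ambient hRmeas i) le_rfl).sub
        measurable_const).div_const _
    have hZb : ∀ ω, |(betaH w R i m ω - α m) / varphi (wnorm w) γ η (i - 1)|
        ≤ 1 / varphi (wnorm w) γ η (i - 1) := by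
      intro ω
      have hβ := betaH_mem hw hw1 R hi m ω
      have h1 : |betaH w R i m ω - α m| ≤ 1 := by
        rw [abs_le]; constructor
        · linarith [hβ.1, hαm.2]
        · linarith [hβ.2, hαm.1]
      rw [abs_div, abs_of_pos hϕIpos]
      gcongr
    have hmgf : ∀ u : ℝ, ∫ ω, Real.exp (u *
        ((betaH w R i m ω - α m) / varphi (wnorm w) γ η (i - 1))) ∂μ
        ≤ Real.exp (u ^ 2 *
            (∑ l ∈ Finset.Icc 1 i, (wnorm w l) ^ 2 / (varphi (wnorm w) γ η (l - 1)) ^ 2) / 8) :=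
      fun u => key m hm u i hi le_rfl
    have hchern := chernoff_two_sided μ _ hZm (1 / varphi (wnorm w) γ η (i - 1)) hZb
      (∑ l ∈ Finset.Icc 1 i, (wnorm w l) ^ 2 / (varphi (wnorm w) γ η (l - 1)) ^ 2)
      (2 * ε / ((M:ℝ) * ((M:ℝ) + 1)) / varphi (wnorm w) γ η (i - 1))
      hSpos (by positivity) hmgf
    refine le_trans (measure_mono ?_) hchern
    intro ω hω
    rw [Set.mem_setOf_eq] at hω ⊢
    rw [abs_div, abs_of_pos hϕIpos]
    exact (div_le_div_iff_of_pos_right hϕIpos).mpr hω.le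
  -- union bound
  have hFmeas : Measurable (fun ω => (∑ m ∈ Finset.Icc 1 M, (m : ℝ) * betaH w R i m ω)
      - ∑ m ∈ Finset.Icc 1 M, (m : ℝ) * α m) :=
    (Finset.measurable_sum _ fun m _ =>
      ((betaH_sm w R i m).measurable.mono (Hsig_le_ambient hRmeas i) le_rfl).const_mul _).sub
      measurable_const
  have hGmeas : MeasurableSet {ω | |(∑ m ∈ Finset.Icc 1 M, (m : ℝ) * betaH w R i m ω)
      - ∑ m ∈ Finset.Icc 1 M, (m : ℝ) * α m| ≤ ε} :=
    measurableSet_le hFmeas.abs measurable_const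
  have hsubset : {ω | |(∑ m ∈ Finset.Icc 1 M, (m : ℝ) * betaH w R i m ω)
      - ∑ m ∈ Finset.Icc 1 M, (m : ℝ) * α m| ≤ ε}ᶜ
      ⊆ ⋃ m ∈ Finset.Icc 1 M,
          {ω | 2 * ε / ((M:ℝ) * ((M:ℝ) + 1)) < |betaH w R i m ω - α m|} := by
    intro ω hω
    simp only [Set.mem_compl_iff, Set.mem_setOf_eq, not_le] at hω
    by_contra hcon
    simp only [Set.mem_iUnion, Set.mem_setOf_eq, not_exists, not_lt] at hcon
    refine absurd ?_ (not_le.mpr hω)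
    have hMne : (M:ℝ) ≠ 0 := hMpos.ne'
    have hM1ne : (M:ℝ) + 1 ≠ 0 := by positivity
    calc |(∑ m ∈ Finset.Icc 1 M, (m : ℝ) * betaH w R i m ω)
            - ∑ m ∈ Finset.Icc 1 M, (m : ℝ) * α m|
        = |∑ m ∈ Finset.Icc 1 M, ((m : ℝ) * betaH w R i m ω - (m : ℝ) * α m)| := by
          rw [Finset.sum_sub_distrib]
      _ ≤ ∑ m ∈ Finset.Icc 1 M, |(m : ℝ) * betaH w R i m ω - (m : ℝ) * α m| :=
          Finset.abs_sum_le_sum_abs _ _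
      _ = ∑ m ∈ Finset.Icc 1 M, (m : ℝ) * |betaH w R i m ω - α m| := by
          refine Finset.sum_congr rfl fun m _ => ?_
          rw [← mul_sub, abs_mul, Nat.abs_cast]
      _ ≤ ∑ m ∈ Finset.Icc 1 M, (m : ℝ) * (2 * ε / ((M:ℝ) * ((M:ℝ) + 1))) :=
          Finset.sum_le_sum fun m hm' =>
            mul_le_mul_of_nonneg_left (hcon m hm') (Nat.cast_nonneg m)
      _ = (∑ m ∈ Finset.Icc 1 M, (m : ℝ)) * (2 * ε / ((M:ℝ) * ((M:ℝ) + 1))) := by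
          rw [← Finset.sum_mul]
      _ = ε := by
          rw [sum_Icc_id_real]
          field_simp
  -- the numeric bound 2 M q ≤ δ
  have hlog_le : Real.log (2 * M / δ)
      ≤ 2 * (2 * ε / ((M:ℝ) * ((M:ℝ) + 1)) / varphi (wnorm w) γ η (i - 1)) ^ 2
        / ∑ l ∈ Finset.Icc 1 i, (wnorm w l) ^ 2 / (varphi (wnorm w) γ η (l - 1)) ^ 2 := by
    have hstep : Real.log (2 * M / δ)
        ≤ (1 / ((varphi (wnorm w) γ η (i - 1)) ^ 2 / 2 *
            ∑ l ∈ Finset.Icc 1 i, (wnorm w l) ^ 2 / (varphi (wnorm w) γ η (l - 1)) ^ 2))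
          / ((M : ℝ) ^ 2 * ((M : ℝ) + 1) ^ 2 / (4 * ε ^ 2)) := by
      rw [le_div_iff₀ hKpos, mul_comm]
      exact hphi
    refine hstep.trans_eq ?_
    have hMne : (M:ℝ) ≠ 0 := hMpos.ne'
    have hM1ne : (M:ℝ) + 1 ≠ 0 := by positivity
    field_simp
    ring
  have hq_le : Real.exp (-(2 * (2 * ε / ((M:ℝ) * ((M:ℝ) + 1)) / varphi (wnorm w) γ η (i - 1)) ^ 2
        / ∑ l ∈ Finset.Icc 1 i, (wnorm w l) ^ 2 / (varphi (wnorm w) γ η (l - 1)) ^ 2))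
      ≤ δ / (2 * M) := by
    have h1 : Real.exp (-(2 * (2 * ε / ((M:ℝ) * ((M:ℝ) + 1)) / varphi (wnorm w) γ η (i - 1)) ^ 2
          / ∑ l ∈ Finset.Icc 1 i, (wnorm w l) ^ 2 / (varphi (wnorm w) γ η (l - 1)) ^ 2))
        ≤ Real.exp (-Real.log (2 * M / δ)) :=
      Real.exp_le_exp.mpr (neg_le_neg hlog_le)
    have h2 : Real.exp (-Real.log (2 * M / δ)) = δ / (2 * M) := by
      rw [Real.exp_neg, Real.exp_log h2M, inv_div]
    exact h1.trans (le_of_eq h2)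
  have hμcompl : μ ({ω | |(∑ m ∈ Finset.Icc 1 M, (m : ℝ) * betaH w R i m ω)
      - ∑ m ∈ Finset.Icc 1 M, (m : ℝ) * α m| ≤ ε}ᶜ) ≤ ENNReal.ofReal δ := by
    calc μ ({ω | |(∑ m ∈ Finset.Icc 1 M, (m : ℝ) * betaH w R i m ω)
          - ∑ m ∈ Finset.Icc 1 M, (m : ℝ) * α m| ≤ ε}ᶜ)
        ≤ μ (⋃ m ∈ Finset.Icc 1 M,
            {ω | 2 * ε / ((M:ℝ) * ((M:ℝ) + 1)) < |betaH w R i m ω - α m|}) :=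
          measure_mono hsubset
      _ ≤ ∑ m ∈ Finset.Icc 1 M,
            μ {ω | 2 * ε / ((M:ℝ) * ((M:ℝ) + 1)) < |betaH w R i m ω - α m|} :=
          measure_biUnion_finset_le _ _
      _ ≤ ∑ _m ∈ Finset.Icc 1 M, ENNReal.ofReal
            (2 * Real.exp (-(2 * (2 * ε / ((M:ℝ) * ((M:ℝ) + 1))
                / varphi (wnorm w) γ η (i - 1)) ^ 2
              / ∑ l ∈ Finset.Icc 1 i, (wnorm w l) ^ 2 / (varphi (wnorm w) γ η (l - 1)) ^ 2))) :=
          Finset.sum_le_sum chern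
      _ = (M : ENNReal) * ENNReal.ofReal
            (2 * Real.exp (-(2 * (2 * ε / ((M:ℝ) * ((M:ℝ) + 1))
                / varphi (wnorm w) γ η (i - 1)) ^ 2
              / ∑ l ∈ Finset.Icc 1 i, (wnorm w l) ^ 2 / (varphi (wnorm w) γ η (l - 1)) ^ 2))) := by
          rw [Finset.sum_const, Nat.card_Icc, nsmul_eq_mul]
          norm_num
      _ ≤ ENNReal.ofReal δ := by
          rw [← ENNReal.ofReal_natCast M, ← ENNReal.ofReal_mul (Nat.cast_nonneg M)]
          refine ENNReal.ofReal_le_ofReal ?_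
          calc (M:ℝ) * (2 * Real.exp (-(2 * (2 * ε / ((M:ℝ) * ((M:ℝ) + 1))
                  / varphi (wnorm w) γ η (i - 1)) ^ 2
                / ∑ l ∈ Finset.Icc 1 i, (wnorm w l) ^ 2 / (varphi (wnorm w) γ η (l - 1)) ^ 2)))
              ≤ (M:ℝ) * (2 * (δ / (2 * M))) := by
                refine mul_le_mul_of_nonneg_left ?_ hMpos.le
                exact mul_le_mul_of_nonneg_left hq_le (by norm_num)
            _ = δ := by field_simp
  -- conclusion
  have hμG : μ {ω | |(∑ m ∈ Finset.Icc 1 M, (m : ℝ) * betaH w R i m ω)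
      - ∑ m ∈ Finset.Icc 1 M, (m : ℝ) * α m| ≤ ε}
      = 1 - μ ({ω | |(∑ m ∈ Finset.Icc 1 M, (m : ℝ) * betaH w R i m ω)
          - ∑ m ∈ Finset.Icc 1 M, (m : ℝ) * α m| ≤ ε}ᶜ) := by
    rw [prob_compl_eq_one_sub hGmeas,
      ENNReal.sub_sub_cancel ENNReal.one_ne_top prob_le_one]
  calc ENNReal.ofReal (1 - δ) = 1 - ENNReal.ofReal δ := by
        rw [ENNReal.ofReal_sub _ hδ0.le, ENNReal.ofReal_one]
    _ ≤ 1 - μ ({ω | |(∑ m ∈ Finset.Icc 1 M, (m : ℝ) * betaH w R i m ω)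
          - ∑ m ∈ Finset.Icc 1 M, (m : ℝ) * α m| ≤ ε}ᶜ) := tsub_le_tsub_left hμcompl 1
    _ = μ {ω | |(∑ m ∈ Finset.Icc 1 M, (m : ℝ) * betaH w R i m ω)
          - ∑ m ∈ Finset.Icc 1 M, (m : ℝ) * α m| ≤ ε} := hμG.symm
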